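/- Let Ω ⊆ ℝ² be open with (0,0) ∈ Ω and let f : ℝ² → ℝ be of class C³ on Ω. Then there exist constants C > 0 and h₀ > 0 such that for every 0 < h ≤ h₀ the triangle S lies in Ω and, with p(x,y) the quadratic interpolant built from the data f_Q = f(Q) for Q ∈ {A,B,C,D,E,F}, one has |f(x,y) − p(x,y)| ≤ C·h³ for all (x,y) in S_R. -/

import Mathlib

set_option linter.unusedVariables false

/-- √3 -/
noncomputable def s3 : ℝ := Real.sqrt 3

/-- Vertices of the equilateral triangle of side `2h` and the midpoints of its sides. -/
noncomputable def ptA (h : ℝ) : ℝ × ℝ := (-h, s3 / 2 * h)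
noncomputable def ptB (h : ℝ) : ℝ × ℝ := (-h / 2, 0)
noncomputable def ptC (h : ℝ) : ℝ × ℝ := (0, -(s3 / 2 * h))
noncomputable def ptD (h : ℝ) : ℝ × ℝ := (h / 2, 0)
noncomputable def ptE (h : ℝ) : ℝ × ℝ := (h, s3 / 2 * h)
noncomputable def ptF (h : ℝ) : ℝ × ℝ := (0, s3 / 2 * h)

/-- Coefficients of the quadratic interpolant. -/
noncomputable def a00 (h fA fB fC fD fE fF : ℝ) : ℝ := 4 / 9 * (fB + fD + fF) - 1 / 9 * (fA + fC + fE)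
noncomputable def a10 (h fA fB fC fD fE fF : ℝ) : ℝ := (-fA - 4 * fB + 4 * fD + fE) / (6 * h)
noncomputable def a01 (h fA fB fC fD fE fF : ℝ) : ℝ := s3 / (18 * h) * (fA - 4 * fB - 2 * fC - 4 * fD + fE + 8 * fF)
noncomputable def a20 (h fA fB fC fD fE fF : ℝ) : ℝ := (fA - 2 * fF + fE) / (2 * h ^ 2)
noncomputable def a11 (h fA fB fC fD fE fF : ℝ) : ℝ := -(s3 / (3 * h ^ 2)) * (fA - 2 * fB + 2 * fD - fE)
noncomputable def a02 (h fA fB fC fD fE fF : ℝ) : ℝ := (fA - 4 * fB + 4 * fC - 4 * fD + fE + 2 * fF) / (6 * h ^ 2)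

/-- The quadratic interpolant `p(x,y)`. -/
noncomputable def interp (h fA fB fC fD fE fF x y : ℝ) : ℝ :=
  a00 h fA fB fC fD fE fF + a10 h fA fB fC fD fE fF * x
    + a01 h fA fB fC fD fE fF * (y - s3 / 6 * h)
    + a20 h fA fB fC fD fE fF * x ^ 2
    + a11 h fA fB fC fD fE fF * x * (y - s3 / 6 * h)
    + a02 h fA fB fC fD fE fF * (y - s3 / 6 * h) ^ 2

/-- The closed equilateral triangle `S` with vertices `A, C, E`. -/
noncomputable def triS (h : ℝ) : Set (ℝ × ℝ) := convexHull ℝ {ptA h, ptC h, ptE h}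
/-- The closed triangle `S_R` with vertices `B, D, F`. -/
noncomputable def triSR (h : ℝ) : Set (ℝ × ℝ) := convexHull ℝ {ptB h, ptD h, ptF h}

lemma interp_exact (h x y c0 c1 c2 d20 d11 d02 : ℝ) (hh : h ≠ 0) (Pq : ℝ × ℝ → ℝ)
    (hPq : ∀ z : ℝ × ℝ, Pq z = c0 + c1*z.1 + c2*z.2 + d20*z.1^2 + d11*z.1*z.2 + d02*z.2^2) :
    interp h (Pq (ptA h)) (Pq (ptB h)) (Pq (ptC h)) (Pq (ptD h)) (Pq (ptE h)) (Pq (ptF h)) x y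
      = Pq (x, y) := by
  have hs : s3 ^ 2 = 3 := Real.sq_sqrt (by norm_num)
  simp only [hPq, ptA, ptB, ptC, ptD, ptE, ptF]
  unfold interp a00 a10 a01 a20 a11 a02
  field_simp
  linear_combination (norm := ring_nf) ((7776:ℝ) * h^2 * (36*(c2*y + d02*y^2 + d11*x*y) - 6*h*s3*(c2 + d11*x) - h^2*s3^2*d02)) * hs

lemma interp_add (h x y fA fB fC fD fE fF gA gB gC gD gE gF : ℝ) :
    interp h (fA + gA) (fB + gB) (fC + gC) (fD + gD) (fE + gE) (fF + gF) x y
      = interp h fA fB fC fD fE fF x y + interp h gA gB gC gD gE gF x y := by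
  unfold interp a00 a10 a01 a20 a11 a02
  ring

lemma abs_add6 (a b c d e f : ℝ) :
    |a + b + c + d + e + f| ≤ |a| + |b| + |c| + |d| + |e| + |f| := by
  calc |a + b + c + d + e + f| ≤ |a + b + c + d + e| + |f| := abs_add_le _ _
    _ ≤ (|a + b + c + d| + |e|) + |f| := by gcongr; exact abs_add_le _ _
    _ ≤ ((|a + b + c| + |d|) + |e|) + |f| := by gcongr; exact abs_add_le _ _
    _ ≤ (((|a + b| + |c|) + |d|) + |e|) + |f| := by gcongr; exact abs_add_le _ _
    _ ≤ ((((|a| + |b|) + |c|) + |d|) + |e|) + |f| := by gcongr; exact abs_add_le _ _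
    _ = |a| + |b| + |c| + |d| + |e| + |f| := by ring

lemma s3_sq : s3 ^ 2 = 3 := Real.sq_sqrt (by norm_num)
lemma s3_nonneg : 0 ≤ s3 := Real.sqrt_nonneg 3
lemma s3_le_two : s3 ≤ 2 := by nlinarith [s3_sq, s3_nonneg]

lemma interp_bound (h K x y eA eB eC eD eE eF : ℝ) (hh : 0 < h)
    (hA : |eA| ≤ K) (hB : |eB| ≤ K) (hC : |eC| ≤ K) (hD : |eD| ≤ K)
    (hE : |eE| ≤ K) (hF : |eF| ≤ K)
    (hx : |x| ≤ 2 * h) (hu : |y - s3 / 6 * h| ≤ 3 * h) :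
    |interp h eA eB eC eD eE eF x y| ≤ 100 * K := by
  have hK : 0 ≤ K := le_trans (abs_nonneg _) hA
  have hA' := abs_le.mp hA
  have hB' := abs_le.mp hB
  have hC' := abs_le.mp hC
  have hD' := abs_le.mp hD
  have hE' := abs_le.mp hE
  have hF' := abs_le.mp hF
  have hs2 := s3_le_two
  have hs0 := s3_nonneg
  have B0 : |a00 h eA eB eC eD eE eF| ≤ 2 * K := by
    unfold a00
    exact abs_le.mpr ⟨by linarith, by linarith⟩
  have B1 : |a10 h eA eB eC eD eE eF * x| ≤ 4 * K := by
    unfold a10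
    rw [abs_mul, abs_div, abs_of_pos (by linarith : (0:ℝ) < 6 * h)]
    have hnum : |(-eA - 4 * eB + 4 * eD + eE)| ≤ 10 * K := abs_le.mpr ⟨by linarith, by linarith⟩
    calc |(-eA - 4 * eB + 4 * eD + eE)| / (6 * h) * |x| ≤ (10 * K) / (6 * h) * (2 * h) := by
          gcongr
      _ = 10 / 3 * K := by field_simp; ring
      _ ≤ 4 * K := by linarith
  have B2 : |a01 h eA eB eC eD eE eF * (y - s3 / 6 * h)| ≤ 7 * K := by
    unfold a01
    rw [abs_mul, abs_mul, abs_div, abs_of_pos (by linarith : (0:ℝ) < 18 * h),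
      abs_of_nonneg hs0]
    have hnum : |(eA - 4 * eB - 2 * eC - 4 * eD + eE + 8 * eF)| ≤ 20 * K :=
      abs_le.mpr ⟨by linarith, by linarith⟩
    calc s3 / (18 * h) * |(eA - 4 * eB - 2 * eC - 4 * eD + eE + 8 * eF)| * |y - s3 / 6 * h|
        ≤ 2 / (18 * h) * (20 * K) * (3 * h) := by gcongr
      _ = 20 / 3 * K := by field_simp; ring
      _ ≤ 7 * K := by linarith
  have B3 : |a20 h eA eB eC eD eE eF * x ^ 2| ≤ 8 * K := by
    unfold a20
    rw [abs_mul, abs_div, abs_of_pos (by positivity : (0:ℝ) < 2 * h ^ 2), abs_pow]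
    have hnum : |(eA - 2 * eF + eE)| ≤ 4 * K := abs_le.mpr ⟨by linarith, by linarith⟩
    calc |(eA - 2 * eF + eE)| / (2 * h ^ 2) * |x| ^ 2
        ≤ (4 * K) / (2 * h ^ 2) * (2 * h) ^ 2 := by gcongr
      _ = 8 * K := by field_simp; ring
  have B4 : |a11 h eA eB eC eD eE eF * x * (y - s3 / 6 * h)| ≤ 24 * K := by
    unfold a11
    rw [abs_mul, abs_mul, abs_mul, abs_neg, abs_div, abs_of_pos (by positivity : (0:ℝ) < 3 * h ^ 2),
      abs_of_nonneg hs0]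
    have hnum : |(eA - 2 * eB + 2 * eD - eE)| ≤ 6 * K := abs_le.mpr ⟨by linarith, by linarith⟩
    calc s3 / (3 * h ^ 2) * |(eA - 2 * eB + 2 * eD - eE)| * |x| * |y - s3 / 6 * h|
        ≤ 2 / (3 * h ^ 2) * (6 * K) * (2 * h) * (3 * h) := by gcongr
      _ = 24 * K := by field_simp; ring
  have B5 : |a02 h eA eB eC eD eE eF * (y - s3 / 6 * h) ^ 2| ≤ 24 * K := by
    unfold a02
    rw [abs_mul, abs_div, abs_of_pos (by positivity : (0:ℝ) < 6 * h ^ 2), abs_pow]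
    have hnum : |(eA - 4 * eB + 4 * eC - 4 * eD + eE + 2 * eF)| ≤ 16 * K :=
      abs_le.mpr ⟨by linarith, by linarith⟩
    calc |(eA - 4 * eB + 4 * eC - 4 * eD + eE + 2 * eF)| / (6 * h ^ 2) * |y - s3 / 6 * h| ^ 2
        ≤ (16 * K) / (6 * h ^ 2) * (3 * h) ^ 2 := by gcongr
      _ = 24 * K := by field_simp; ring
  unfold interp
  refine le_trans (abs_add6 _ _ _ _ _ _) ?_
  linarith

open Metric Set

set_option maxHeartbeats 1000000 in
lemma taylor_bound {Ω : Set (ℝ × ℝ)} (hΩ : IsOpen Ω) {f : ℝ × ℝ → ℝ} (hf : ContDiffOn ℝ 3 f Ω)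
    {r : ℝ} (hr : 0 < r) (hball : closedBall (0 : ℝ × ℝ) r ⊆ Ω) :
    ∃ M > 0, ∀ z ∈ closedBall (0 : ℝ × ℝ) r,
      |f z - (f 0 + fderiv ℝ f 0 z + 1 / 2 * fderiv ℝ (fderiv ℝ f) 0 z z)| ≤ M * ‖z‖ ^ 3 := by
  set g1 := fderiv ℝ f with hg1def
  set g2 := fderiv ℝ g1 with hg2def
  set g3 := fderiv ℝ g2 with hg3def
  have hg1 : ContDiffOn ℝ 2 g1 Ω := hf.fderiv_of_isOpen hΩ (by norm_num)
  have hg2 : ContDiffOn ℝ 1 g2 Ω := hg1.fderiv_of_isOpen hΩ (by norm_num)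
  have hg3 := hg2.continuousOn_fderiv_of_isOpen hΩ le_rfl
  have hder0 : ∀ x ∈ Ω, HasFDerivAt f (g1 x) x := fun x hx =>
    ((hf.contDiffAt (hΩ.mem_nhds hx)).differentiableAt (by norm_num)).hasFDerivAt
  have hder1 : ∀ x ∈ Ω, HasFDerivAt g1 (g2 x) x := fun x hx =>
    ((hg1.contDiffAt (hΩ.mem_nhds hx)).differentiableAt (by norm_num)).hasFDerivAt
  have hder2 : ∀ x ∈ Ω, HasFDerivAt g2 (g3 x) x := fun x hx =>
    ((hg2.contDiffAt (hΩ.mem_nhds hx)).differentiableAt (by norm_num)).hasFDerivAt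
  obtain ⟨M0, hM0⟩ := (isCompact_closedBall (0 : ℝ × ℝ) r).exists_bound_of_continuousOn
    (hg3.mono hball)
  set M := M0 + 1 with hMdef
  have hM0nonneg : 0 ≤ M0 := le_trans (norm_nonneg _) (hM0 0 (mem_closedBall_self hr.le))
  have hMpos : 0 < M := by linarith
  have hMb := fun x (hx : x ∈ closedBall (0 : ℝ × ℝ) r) =>
    le_trans (hM0 x hx) (by linarith : M0 ≤ M)
  -- Step A
  have stepA : ∀ z ∈ closedBall (0 : ℝ × ℝ) r, ‖g2 z - g2 0‖ ≤ M * ‖z‖ := by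
    intro z hz
    have := (convex_closedBall (0 : ℝ × ℝ) r).norm_image_sub_le_of_norm_hasFDerivWithin_le
      (fun x hx => (hder2 x (hball hx)).hasFDerivWithinAt) hMb (mem_closedBall_self hr.le) hz
    simpa using this
  have smem : ∀ (z : ℝ × ℝ), z ∈ closedBall (0 : ℝ × ℝ) r → ∀ t ∈ Icc (0:ℝ) 1,
      t • z ∈ closedBall (0 : ℝ × ℝ) r := by
    intro z hz t ht
    rw [mem_closedBall, dist_zero_right] at hz ⊢
    rw [norm_smul, Real.norm_eq_abs, abs_of_nonneg ht.1]
    calc t * ‖z‖ ≤ 1 * ‖z‖ := by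
          have := norm_nonneg z; nlinarith [ht.2]
      _ = ‖z‖ := one_mul _
      _ ≤ r := hz
  -- Step B
  have stepB : ∀ z ∈ closedBall (0 : ℝ × ℝ) r, ‖g1 z - g1 0 - g2 0 z‖ ≤ M / 2 * ‖z‖ ^ 2 := by
    intro z hz
    set ψ : ℝ → (ℝ × ℝ) →L[ℝ] ℝ := fun t => g1 (t • z) - g2 0 (t • z) - g1 0 with hψdef
    have hsm : ∀ t : ℝ, HasDerivAt (fun t : ℝ => t • z) z t := by
      intro t
      simpa using (hasDerivAt_id t).smul_const z
    have hψ' : ∀ t ∈ Icc (0:ℝ) 1, HasDerivAt ψ (g2 (t • z) z - g2 0 z) t := by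
      intro t ht
      have h2 : HasDerivAt (fun t : ℝ => g1 (t • z)) (g2 (t • z) z) t :=
        (hder1 _ (hball (smem z hz t ht))).comp_hasDerivAt t (hsm t)
      have h3 : HasDerivAt (fun t : ℝ => g2 0 (t • z)) (g2 0 z) t :=
        (g2 0).hasFDerivAt.comp_hasDerivAt t (hsm t)
      simpa [hψdef] using (h2.sub h3).sub_const (g1 0)
    have bound := image_norm_le_of_norm_deriv_right_le_deriv_boundary
      (f := ψ) (f' := fun t => g2 (t • z) z - g2 0 z) (a := 0) (b := 1)
      (B := fun t => M * ‖z‖ ^ 2 / 2 * t ^ 2) (B' := fun t => M * ‖z‖ ^ 2 * t)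
      (fun t ht => ((hψ' t ht).continuousAt).continuousWithinAt)
      (fun t ht => (hψ' t (Ico_subset_Icc_self ht)).hasDerivWithinAt)
      (by simp [hψdef])
      (fun t => by
        have := ((hasDerivAt_pow 2 t).const_mul (M * ‖z‖ ^ 2 / 2))
        exact this.congr_deriv (by push_cast; ring))
      (fun t ht => by
        have h1 : ‖g2 (t • z) z - g2 0 z‖ ≤ ‖g2 (t • z) - g2 0‖ * ‖z‖ := by
          have := (g2 (t • z) - g2 0).le_opNorm z
          simpa using this
        have h2 : ‖g2 (t • z) - g2 0‖ ≤ M * (t * ‖z‖) := by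
          have := stepA (t • z) (smem z hz t (Ico_subset_Icc_self ht))
          rwa [norm_smul, Real.norm_eq_abs, abs_of_nonneg ht.1] at this
        calc ‖g2 (t • z) z - g2 0 z‖ ≤ M * (t * ‖z‖) * ‖z‖ := by
              refine le_trans h1 ?_
              exact mul_le_mul_of_nonneg_right h2 (norm_nonneg z)
          _ = M * ‖z‖ ^ 2 * t := by ring)
    have := bound (right_mem_Icc.mpr zero_le_one)
    have hψ1 : ψ 1 = g1 z - g2 0 z - g1 0 := by simp [hψdef]
    rw [hψ1] at this
    calc ‖g1 z - g1 0 - g2 0 z‖ = ‖g1 z - g2 0 z - g1 0‖ := by rw [sub_right_comm]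
      _ ≤ M * ‖z‖ ^ 2 / 2 * 1 ^ 2 := this
      _ = M / 2 * ‖z‖ ^ 2 := by ring
  -- Step C
  refine ⟨M, hMpos, fun z hz => ?_⟩
  set c1z : ℝ := g1 0 z with hc1z
  set c2z : ℝ := g2 0 z z with hc2z
  set φ : ℝ → ℝ := fun t => f (t • z) - f 0 - t * c1z - t ^ 2 * (c2z / 2) with hφdef
  have hsm : ∀ t : ℝ, HasDerivAt (fun t : ℝ => t • z) z t := by
    intro t
    simpa using (hasDerivAt_id t).smul_const z
  have hφ' : ∀ t ∈ Icc (0:ℝ) 1, HasDerivAt φ (g1 (t • z) z - c1z - t * c2z) t := by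
    intro t ht
    have h2 : HasDerivAt (fun t : ℝ => f (t • z)) (g1 (t • z) z) t :=
      (hder0 _ (hball (smem z hz t ht))).comp_hasDerivAt t (hsm t)
    have h3 : HasDerivAt (fun t : ℝ => t * c1z) c1z t := hasDerivAt_mul_const c1z
    have h4 : HasDerivAt (fun t : ℝ => t ^ 2 * (c2z / 2)) (2 * t ^ 1 * (c2z / 2)) t :=
      (hasDerivAt_pow 2 t).mul_const (c2z / 2)
    have := ((h2.sub_const (f 0)).sub h3).sub h4
    exact this.congr_deriv (by ring)
  have bound := image_norm_le_of_norm_deriv_right_le_deriv_boundary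
    (f := φ) (f' := fun t => g1 (t • z) z - c1z - t * c2z) (a := 0) (b := 1)
    (B := fun t => M / 2 * ‖z‖ ^ 3 / 3 * t ^ 3) (B' := fun t => M / 2 * ‖z‖ ^ 3 * t ^ 2)
    (fun t ht => ((hφ' t ht).continuousAt).continuousWithinAt)
    (fun t ht => (hφ' t (Ico_subset_Icc_self ht)).hasDerivWithinAt)
    (by simp [hφdef])
    (fun t => by
      have := ((hasDerivAt_pow 3 t).const_mul (M / 2 * ‖z‖ ^ 3 / 3))
      exact this.congr_deriv (by push_cast; ring))
    (fun t ht => by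
      have key : g1 (t • z) z - c1z - t * c2z = (g1 (t • z) - g1 0 - g2 0 (t • z)) z := by
        have hsw : g2 0 (t • z) = t • (g2 0 z) := (g2 0).map_smul t z
        simp [hc1z, hc2z, hsw, ContinuousLinearMap.sub_apply, ContinuousLinearMap.smul_apply]
        try ring
      rw [key]
      have h1 : ‖(g1 (t • z) - g1 0 - g2 0 (t • z)) z‖ ≤ ‖g1 (t • z) - g1 0 - g2 0 (t • z)‖ * ‖z‖ :=
        (g1 (t • z) - g1 0 - g2 0 (t • z)).le_opNorm z
      have h2 : ‖g1 (t • z) - g1 0 - g2 0 (t • z)‖ ≤ M / 2 * (t * ‖z‖) ^ 2 := by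
        have := stepB (t • z) (smem z hz t (Ico_subset_Icc_self ht))
        rwa [norm_smul, Real.norm_eq_abs, abs_of_nonneg ht.1] at this
      calc ‖(g1 (t • z) - g1 0 - g2 0 (t • z)) z‖ ≤ M / 2 * (t * ‖z‖) ^ 2 * ‖z‖ :=
            le_trans h1 (mul_le_mul_of_nonneg_right h2 (norm_nonneg z))
        _ = M / 2 * ‖z‖ ^ 3 * t ^ 2 := by ring)
  have hb1 := bound (right_mem_Icc.mpr zero_le_one)
  have hφ1 : φ 1 = f z - f 0 - c1z - c2z / 2 := by simp [hφdef]
  rw [hφ1] at hb1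
  have : |f z - (f 0 + c1z + 1 / 2 * c2z)| ≤ M / 6 * ‖z‖ ^ 3 := by
    calc |f z - (f 0 + c1z + 1 / 2 * c2z)| = ‖f z - f 0 - c1z - c2z / 2‖ := by
          rw [Real.norm_eq_abs]; congr 1; ring
      _ ≤ M / 2 * ‖z‖ ^ 3 / 3 * 1 ^ 3 := hb1
      _ = M / 6 * ‖z‖ ^ 3 := by ring
  refine le_trans this ?_
  have : (0:ℝ) ≤ ‖z‖ ^ 3 := by positivity
  nlinarith

lemma abs_sub'' (a b : ℝ) : |a - b| ≤ |a| + |b| := by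
  calc |a - b| = |a + (-b)| := by ring_nf
    _ ≤ |a| + |(-b)| := abs_add_le _ _
    _ = |a| + |b| := by rw [abs_neg]

lemma pt_norm_le (h : ℝ) (hh : 0 < h) :
    ‖ptA h‖ ≤ h ∧ ‖ptB h‖ ≤ h ∧ ‖ptC h‖ ≤ h ∧ ‖ptD h‖ ≤ h ∧ ‖ptE h‖ ≤ h ∧ ‖ptF h‖ ≤ h := by
  have hs2 := s3_le_two
  have hs0 := s3_nonneg
  refine ⟨?_, ?_, ?_, ?_, ?_, ?_⟩ <;>
  · simp only [ptA, ptB, ptC, ptD, ptE, ptF, Prod.norm_def, Real.norm_eq_abs]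
    apply max_le <;> (rw [abs_le]; constructor <;> nlinarith)


set_option maxHeartbeats 2000000 in
/-- Third order approximation of the linear reconstruction for `C³` functions. -/
theorem interp_third_order (Ω : Set (ℝ × ℝ)) (hΩ : IsOpen Ω) (hmem : (0, 0) ∈ Ω)
    (f : ℝ × ℝ → ℝ) (hf : ContDiffOn ℝ 3 f Ω) :
    ∃ C > 0, ∃ h₀ > 0, ∀ h : ℝ, 0 < h → h ≤ h₀ →
      triS h ⊆ Ω ∧
      ∀ z ∈ triSR h,
        |f z - interp h (f (ptA h)) (f (ptB h)) (f (ptC h)) (f (ptD h)) (f (ptE h)) (f (ptF h))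
            z.1 z.2| ≤ C * h ^ 3 := by
  obtain ⟨ε, hε, hball⟩ := Metric.isOpen_iff.mp hΩ (0, 0) hmem
  have hr : 0 < ε / 2 := by positivity
  have hballr : closedBall (0 : ℝ × ℝ) (ε / 2) ⊆ Ω := by
    refine subset_trans ?_ hball
    intro w hw
    rw [mem_closedBall] at hw
    rw [mem_ball]
    calc dist w (0, 0) = dist w 0 := rfl
      _ ≤ ε / 2 := hw
      _ < ε := by linarith
  obtain ⟨M, hM, hTay⟩ := taylor_bound hΩ hf hr hballr
  set L := fderiv ℝ f 0 with hL
  set Q := fderiv ℝ (fderiv ℝ f) 0 with hQ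
  set c0 := f 0 with hc0
  set c1 := L (1, 0) with hc1
  set c2 := L (0, 1) with hc2
  set d20 := Q (1, 0) (1, 0) / 2 with hd20
  set d11 := (Q (1, 0) (0, 1) + Q (0, 1) (1, 0)) / 2 with hd11
  set d02 := Q (0, 1) (0, 1) / 2 with hd02
  set Tf : ℝ × ℝ → ℝ :=
    fun w => c0 + c1 * w.1 + c2 * w.2 + d20 * w.1 ^ 2 + d11 * w.1 * w.2 + d02 * w.2 ^ 2 with hTfdef
  have hTf : ∀ w : ℝ × ℝ, f 0 + L w + 1 / 2 * Q w w = Tf w := by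
    rintro ⟨wx, wy⟩
    have hw : (wx, wy) = wx • ((1 : ℝ), (0 : ℝ)) + wy • ((0 : ℝ), (1 : ℝ)) := by
      simp [Prod.ext_iff]
    conv_lhs => rw [hw]
    simp only [map_add, map_smul, ContinuousLinearMap.add_apply, ContinuousLinearMap.smul_apply,
      smul_eq_mul, hTfdef]
    ring
  have hTay' : ∀ w ∈ closedBall (0 : ℝ × ℝ) (ε / 2), |f w - Tf w| ≤ M * ‖w‖ ^ 3 := by
    intro w hw
    have := hTay w hw
    rwa [hTf w] at this
  refine ⟨101 * M, by positivity, ε / 2, hr, fun h hh hhle => ?_⟩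
  obtain ⟨nA, nB, nC, nD, nE, nF⟩ := pt_norm_le h hh
  have memr : ∀ w : ℝ × ℝ, ‖w‖ ≤ h → w ∈ closedBall (0 : ℝ × ℝ) (ε / 2) := by
    intro w hw
    rw [mem_closedBall, dist_zero_right]
    linarith
  constructor
  · -- triS h ⊆ Ω
    refine subset_trans ?_ hballr
    unfold triS
    refine convexHull_min ?_ (convex_closedBall _ _)
    intro p hp
    simp only [Set.mem_insert_iff, Set.mem_singleton_iff] at hp
    rcases hp with rfl | rfl | rfl
    exacts [memr _ nA, memr _ nC, memr _ nE]
  · intro z hz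
    have hzball : ‖z‖ ≤ h := by
      have : z ∈ closedBall (0 : ℝ × ℝ) h := by
        refine convexHull_min ?_ (convex_closedBall _ _) hz
        intro p hp
        simp only [Set.mem_insert_iff, Set.mem_singleton_iff] at hp
        rcases hp with rfl | rfl | rfl <;>
          (rw [mem_closedBall, dist_zero_right]); exacts [nB, nD, nF]
      rwa [mem_closedBall, dist_zero_right] at this
    have hK : ∀ w : ℝ × ℝ, ‖w‖ ≤ h → |f w - Tf w| ≤ M * h ^ 3 := by
      intro w hw
      refine le_trans (hTay' w (memr w hw)) ?_
      have h3 : ‖w‖ ^ 3 ≤ h ^ 3 := pow_le_pow_left₀ (norm_nonneg _) hw 3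
      nlinarith
    have hfA : f (ptA h) = Tf (ptA h) + (f (ptA h) - Tf (ptA h)) := by ring
    have hfB : f (ptB h) = Tf (ptB h) + (f (ptB h) - Tf (ptB h)) := by ring
    have hfC : f (ptC h) = Tf (ptC h) + (f (ptC h) - Tf (ptC h)) := by ring
    have hfD : f (ptD h) = Tf (ptD h) + (f (ptD h) - Tf (ptD h)) := by ring
    have hfE : f (ptE h) = Tf (ptE h) + (f (ptE h) - Tf (ptE h)) := by ring
    have hfF : f (ptF h) = Tf (ptF h) + (f (ptF h) - Tf (ptF h)) := by ring
    rw [hfA, hfB, hfC, hfD, hfE, hfF, interp_add,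
      interp_exact h z.1 z.2 c0 c1 c2 d20 d11 d02 (ne_of_gt hh) Tf (fun w => rfl)]
    have hx : |z.1| ≤ 2 * h := by
      have := norm_fst_le z
      rw [← Real.norm_eq_abs]
      calc ‖z.1‖ ≤ ‖z‖ := norm_fst_le z
        _ ≤ h := hzball
        _ ≤ 2 * h := by linarith
    have hz2 : |z.2| ≤ h := by
      rw [← Real.norm_eq_abs]
      exact le_trans (norm_snd_le z) hzball
    have hu : |z.2 - s3 / 6 * h| ≤ 3 * h := by
      have h2 := abs_le.mp hz2
      have hs2 := s3_le_two
      have hs0 := s3_nonneg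
      rw [abs_le]
      constructor <;> nlinarith
    have h1 : |f z - Tf z| ≤ M * h ^ 3 := hK z hzball
    have h2 := interp_bound h (M * h ^ 3) z.1 z.2 _ _ _ _ _ _ hh
      (hK _ nA) (hK _ nB) (hK _ nC) (hK _ nD) (hK _ nE) (hK _ nF) hx hu
    calc |f z - (Tf (z.1, z.2)
          + interp h (f (ptA h) - Tf (ptA h)) (f (ptB h) - Tf (ptB h)) (f (ptC h) - Tf (ptC h))
            (f (ptD h) - Tf (ptD h)) (f (ptE h) - Tf (ptE h)) (f (ptF h) - Tf (ptF h)) z.1 z.2)|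
        = |(f z - Tf z)
          - interp h (f (ptA h) - Tf (ptA h)) (f (ptB h) - Tf (ptB h)) (f (ptC h) - Tf (ptC h))
            (f (ptD h) - Tf (ptD h)) (f (ptE h) - Tf (ptE h)) (f (ptF h) - Tf (ptF h)) z.1 z.2| := by
          congr 1; ring
      _ ≤ |f z - Tf z| + |interp h (f (ptA h) - Tf (ptA h)) (f (ptB h) - Tf (ptB h))
            (f (ptC h) - Tf (ptC h)) (f (ptD h) - Tf (ptD h)) (f (ptE h) - Tf (ptE h))
            (f (ptF h) - Tf (ptF h)) z.1 z.2| := abs_sub'' _ _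
      _ ≤ M * h ^ 3 + 100 * (M * h ^ 3) := add_le_add h1 h2
      _ = 101 * M * h ^ 3 := by ring
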